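/- Let ν be a class (ii) distribution with associated functions f, φ, Φ, let θ ≥ 1, and let F_Φ be the associated divergence-generating function. Let η be a probability measure on [0,∞) with density g such that g(x) ≤ 1 for all sufficiently large x and such that g/f is bounded on every compact interval. If the θ-th moment E_η[X^θ] = ∫₀^∞ x^θ g(x) dx is finite, then D_{F_Φ}(η|ν) < ∞. -/

import Mathlib

open Filter MeasureTheory Set
open scoped ENNReal Topology

noncomputable section

/-- The `F`-divergence `D_F(η|ν)` between a reference density `f` and an
alternative density `g` on `(0,∞)` (the value `⊤` encodes an infinite divergence). -/
def Ddiv (F f g : ℝ → ℝ) : ℝ≥0∞ :=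
  ∫⁻ x in Set.Ioi (0 : ℝ), ENNReal.ofReal (F (g x / f x) * f x)

/-- Generator of the polynomial (α-) divergence: `F(y) = (y^α - 1)/(α(α-1))`. -/
def Falpha (α : ℝ) : ℝ → ℝ := fun y => (y ^ α - 1) / (α * (α - 1))

/-- Class (i): the log-density grows at least linearly, `lim φ(x)/x > c > 0`. -/
def IsClassI (φ : ℝ → ℝ) : Prop :=
  ∃ c : ℝ, 0 < c ∧ ∀ᶠ x in atTop, c < φ x / x

/-- Data witnessing that a distribution with log-density `φ` (density `exp(-φ)`) is of
class (ii): heavier than exponential but lighter than any power law, together with the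
auxiliary function `Φ` and the inverse `Ψ = Φ⁻¹` of its restriction to `[x̄, ∞)`. -/
structure ClassIIData (φ : ℝ → ℝ) : Type where
  xbar : ℝ
  Φ : ℝ → ℝ
  Ψ : ℝ → ℝ
  xbar_pos : 0 < xbar
  tendsto_div_id : Tendsto (fun x => φ x / x) atTop (nhds 0)
  tendsto_div_log : Tendsto (fun x => φ x / Real.log x) atTop atTop
  pos : ∀ x ∈ Set.Ici xbar, 0 < Φ x
  strictConcave : StrictConcaveOn ℝ (Set.Ici xbar) Φ
  smooth : ContDiffOn ℝ 2 Φ (Set.Ici xbar)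
  strictMono : StrictMonoOn Φ (Set.Ici xbar)
  inv_left : ∀ x ∈ Set.Ici xbar, Ψ (Φ x) = x
  inv_right : ∀ y ∈ Set.Ici (Φ xbar), Φ (Ψ y) = y
  liminf_pos : ∃ c : ℝ, 0 < c ∧ ∀ᶠ x in atTop, c ≤ Ψ (φ x) / x
  limsup_lt_top : ∃ C : ℝ, ∀ᶠ x in atTop, Ψ (φ x) / x ≤ C

namespace ClassIIData

variable {φ : ℝ → ℝ}

/-- `ȳ = exp(Φ(x̄))`. -/
def ybar (d : ClassIIData φ) : ℝ := Real.exp (d.Φ d.xbar)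

/-- The constant `a = (1+log ȳ)/(Φ⁻¹(log ȳ)^θ + θ Φ⁻¹(log ȳ)^{θ-1} (Φ⁻¹)'(log ȳ))`. -/
def aconst (d : ClassIIData φ) (θ : ℝ) : ℝ :=
  (1 + Real.log d.ybar) /
    (d.Ψ (Real.log d.ybar) ^ θ +
      θ * d.Ψ (Real.log d.ybar) ^ (θ - 1) * deriv d.Ψ (Real.log d.ybar))

/-- The constant `b = ȳ log ȳ - a ȳ Φ⁻¹(log ȳ)^θ`. -/
def bconst (d : ClassIIData φ) (θ : ℝ) : ℝ :=
  d.ybar * Real.log d.ybar - d.aconst θ * d.ybar * d.Ψ (Real.log d.ybar) ^ θ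

/-- The divergence generator `F_Φ`: `y log y` for `y ≤ ȳ` and
`a y Φ⁻¹(log y)^θ + b` for `y > ȳ`. -/
def FPhi (d : ClassIIData φ) (θ : ℝ) : ℝ → ℝ := fun y =>
  if y ≤ d.ybar then y * Real.log y
  else d.aconst θ * y * d.Ψ (Real.log y) ^ θ + d.bconst θ

/-- `ψ(x) = a Φ⁻¹(x)^θ`. -/
def psiFun (d : ClassIIData φ) (θ : ℝ) : ℝ → ℝ := fun x => d.aconst θ * d.Ψ x ^ θ

/-- The integrand of `I(c) = ∫_c^∞ e^y (ψ(y)+ψ'(y))(ψ'(y)+ψ''(y)) f((F_Φ'(e^y)-α₁)/α₂) dy`. -/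
def Iintegrand (d : ClassIIData φ) (θ α₁ α₂ : ℝ) (f : ℝ → ℝ) : ℝ → ℝ := fun y =>
  Real.exp y * (d.psiFun θ y + deriv (d.psiFun θ) y) *
    (deriv (d.psiFun θ) y + deriv (deriv (d.psiFun θ)) y) *
    f ((deriv (d.FPhi θ) (Real.exp y) - α₁) / α₂)

end ClassIIData

/-- Convex conjugate over `s ≥ 0`: `F*(x) = sup_{s ≥ 0} (x s - F(s))`. -/
def Fstar (F : ℝ → ℝ) : ℝ → ℝ := fun x => sSup ((fun s => x * s - F s) '' Set.Ici (0 : ℝ))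

/-- Pseudo-regular variation: `limsup_{c→1} limsup_{x→∞} h(cx)/h(x) = 1`,
spelled out in ε-form. -/
def PseudoRegularlyVarying (h : ℝ → ℝ) : Prop :=
  (∀ ε > (0:ℝ), ∀ᶠ c in nhds (1:ℝ), ∀ᶠ x in atTop, h (c * x) / h x ≤ 1 + ε) ∧
  (∀ ε > (0:ℝ), ∃ᶠ c in nhds (1:ℝ), ∃ᶠ x in atTop, 1 - ε ≤ h (c * x) / h x)

private lemma mul_log_le_of_le {y b : ℝ} (h0 : 0 ≤ y) (hyb : y ≤ b) (hb : 1 ≤ b) :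
    y * Real.log y ≤ b * Real.log b := by
  rcases le_or_gt y 1 with h1 | h1
  · have hy : Real.log y ≤ 0 := Real.log_nonpos h0 h1
    have hbb : 0 ≤ b * Real.log b := mul_nonneg (zero_le_one.trans hb) (Real.log_nonneg hb)
    nlinarith
  · have hlog : Real.log y ≤ Real.log b := Real.log_le_log (zero_lt_one.trans h1) hyb
    have h2 : 0 ≤ Real.log y := Real.log_nonneg h1.le
    nlinarith

/-- Proposition 4.4: a finite θ-th moment yields a finite `F_Φ`-divergence. -/
theorem stmt9
    (φ f : ℝ → ℝ)
    (hf : ∀ x ∈ Set.Ioi (0:ℝ), f x = Real.exp (-(φ x)))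
    (hfc : ContinuousOn f (Set.Ioi 0))
    (hfint : ∫ x in Set.Ioi (0:ℝ), f x = 1)
    (d : ClassIIData φ) (θ : ℝ) (hθ : 1 ≤ θ)
    (g : ℝ → ℝ) (hgc : ContinuousOn g (Set.Ioi 0))
    (hg0 : ∀ x ∈ Set.Ioi (0:ℝ), 0 ≤ g x)
    (hgint : ∫ x in Set.Ioi (0:ℝ), g x = 1)
    (hg1 : ∀ᶠ x in atTop, g x ≤ 1)
    (hratio : ∀ K : Set ℝ, IsCompact K → ∃ C : ℝ, ∀ x ∈ K ∩ Set.Ioi (0:ℝ), g x / f x ≤ C)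
    (hmom : IntegrableOn (fun x => x ^ θ * g x) (Set.Ioi 0)) :
    Ddiv (d.FPhi θ) f g < ⊤ := by
  classical
  obtain ⟨C₀, hC₀⟩ := d.limsup_lt_top
  obtain ⟨c, hc_pos, hc⟩ := d.liminf_pos
  have hxb_pos : 0 < d.xbar := d.xbar_pos
  have hΦxb_pos : 0 < d.Φ d.xbar := d.pos _ Set.self_mem_Ici
  have hlogyb : Real.log d.ybar = d.Φ d.xbar := Real.log_exp _
  have hyb_pos : 0 < d.ybar := Real.exp_pos _
  have hyb_gt1 : 1 < d.ybar := by
    have := Real.exp_lt_exp.mpr hΦxb_pos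
    rwa [Real.exp_zero] at this
  have hfpos : ∀ x ∈ Set.Ioi (0:ℝ), 0 < f x := fun x hx => by
    rw [hf x hx]; exact Real.exp_pos _
  have hθ0 : (0:ℝ) ≤ θ := zero_le_one.trans hθ
  -- φ tends to infinity
  have hφ_top : Tendsto φ atTop atTop := by
    have h1 : Tendsto (fun x => φ x / Real.log x * Real.log x) atTop atTop :=
      d.tendsto_div_log.atTop_mul_atTop₀ Real.tendsto_log_atTop
    refine h1.congr' ?_
    filter_upwards [eventually_gt_atTop 1] with x hx
    rw [div_mul_cancel₀]
    exact (Real.log_pos hx).ne'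
  -- Φ is surjective onto [Φ x̄, ∞)
  have hsurj : ∀ y, d.Φ d.xbar ≤ y → ∃ x, d.xbar ≤ x ∧ d.Φ x = y := by
    intro y hy
    have hev : ∀ᶠ x in atTop,
        (c ≤ d.Ψ (φ x) / x ∧ max y (d.Φ d.xbar) ≤ φ x) ∧ max (d.xbar / c) 1 ≤ x :=
      (hc.and (hφ_top.eventually_ge_atTop _)).and (eventually_ge_atTop _)
    obtain ⟨x, ⟨hx1, hx2⟩, hx3⟩ := hev.exists
    have hxpos : (0:ℝ) < x := lt_of_lt_of_le zero_lt_one ((le_max_right _ _).trans hx3)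
    have hcx : c * x ≤ d.Ψ (φ x) := by
      have := (le_div_iff₀ hxpos).mp hx1
      linarith
    have ht1 : d.xbar ≤ d.Ψ (φ x) := by
      have h1 : d.xbar / c ≤ x := (le_max_left _ _).trans hx3
      have h2 : d.xbar = c * (d.xbar / c) := by field_simp
      nlinarith
    have hΦt : d.Φ (d.Ψ (φ x)) = φ x :=
      d.inv_right _ ((le_max_right _ _).trans hx2)
    have hcont : ContinuousOn d.Φ (Set.Icc d.xbar (d.Ψ (φ x))) :=
      d.smooth.continuousOn.mono Set.Icc_subset_Ici_self
    have hmem : y ∈ Set.Icc (d.Φ d.xbar) (d.Φ (d.Ψ (φ x))) :=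
      ⟨hy, by rw [hΦt]; exact (le_max_left _ _).trans hx2⟩
    obtain ⟨x', hx', hΦx'⟩ := intermediate_value_Icc ht1 hcont hmem
    exact ⟨x', hx'.1, hΦx'⟩
  have hΨ_ge : ∀ y, d.Φ d.xbar ≤ y → d.xbar ≤ d.Ψ y := by
    intro y hy
    obtain ⟨x, hx, rfl⟩ := hsurj y hy
    rw [d.inv_left x hx]; exact hx
  have hΨ_mono : ∀ u v, d.Φ d.xbar ≤ u → u ≤ v → d.Ψ u ≤ d.Ψ v := by
    intro u v hu huv
    obtain ⟨xu, hxu, rfl⟩ := hsurj u hu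
    obtain ⟨xv, hxv, rfl⟩ := hsurj v (hu.trans huv)
    rw [d.inv_left xu hxu, d.inv_left xv hxv]
    exact (d.strictMono.le_iff_le hxu hxv).mp huv
  set A := d.aconst θ with hA'
  set B := d.bconst θ with hB'
  set C := max C₀ 1 with hCdef
  have hC_pos : (0:ℝ) < C := lt_of_lt_of_le zero_lt_one (le_max_right _ _)
  -- choose the threshold x₀
  have hev2 : ∀ᶠ x in atTop, g x ≤ 1 ∧ d.Ψ (φ x) / x ≤ C₀ ∧ d.Φ d.xbar ≤ φ x :=
    hg1.and (hC₀.and (hφ_top.eventually_ge_atTop _))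
  obtain ⟨x₁, hx₁⟩ := eventually_atTop.mp hev2
  set x₀ := max x₁ 1 with hx₀def
  obtain ⟨CK, hCK⟩ := hratio (Set.Icc 0 x₀) isCompact_Icc
  set C₂ := max CK d.ybar with hC₂def
  have hC₂yb : d.ybar ≤ C₂ := le_max_right _ _
  have hC₂pos : (0:ℝ) < C₂ := lt_of_lt_of_le hyb_pos hC₂yb
  set M := |d.ybar * Real.log d.ybar| + |B| + |A * C₂ * d.Ψ (Real.log C₂) ^ θ| with hM
  set K := |A| * C ^ θ with hK
  have hK_nonneg : 0 ≤ K := mul_nonneg (abs_nonneg _) (Real.rpow_nonneg hC_pos.le _)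
  have key : ∀ x ∈ Set.Ioi (0:ℝ), d.FPhi θ (g x / f x) * f x ≤ M * f x + K * (x ^ θ * g x) := by
    intro x hx
    have hx0 : (0:ℝ) < x := hx
    have hfx : 0 < f x := hfpos x hx
    have hgx : 0 ≤ g x := hg0 x hx
    set y := g x / f x with hy
    have hy0 : 0 ≤ y := div_nonneg hgx hfx.le
    have hKx : 0 ≤ K * (x ^ θ * g x) :=
      mul_nonneg hK_nonneg (mul_nonneg (Real.rpow_nonneg hx0.le _) hgx)
    rw [ClassIIData.FPhi]
    by_cases hycase : y ≤ d.ybar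
    · rw [if_pos hycase]
      have h1 : y * Real.log y ≤ d.ybar * Real.log d.ybar :=
        mul_log_le_of_le hy0 hycase hyb_gt1.le
      have h3 : d.ybar * Real.log d.ybar ≤ M := by
        rw [hM]
        have := le_abs_self (d.ybar * Real.log d.ybar)
        have := abs_nonneg B
        have := abs_nonneg (A * C₂ * d.Ψ (Real.log C₂) ^ θ)
        linarith
      have h2 := mul_le_mul_of_nonneg_right h1 hfx.le
      have h4 := mul_le_mul_of_nonneg_right h3 hfx.le
      linarith
    · rw [if_neg hycase]
      push_neg at hycase
      have hypos : 0 < y := hyb_pos.trans hycase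
      have hlogy : d.Φ d.xbar < Real.log y := by
        rw [← hlogyb]; exact Real.log_lt_log hyb_pos hycase
      have hΨy : d.xbar ≤ d.Ψ (Real.log y) := hΨ_ge _ hlogy.le
      have hΨy0 : 0 ≤ d.Ψ (Real.log y) := hxb_pos.le.trans hΨy
      have hΨyθ : 0 ≤ d.Ψ (Real.log y) ^ θ := Real.rpow_nonneg hΨy0 _
      have hBM : |B| ≤ M := by
        rw [hM]
        have := abs_nonneg (d.ybar * Real.log d.ybar)
        have := abs_nonneg (A * C₂ * d.Ψ (Real.log C₂) ^ θ)
        linarith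
      by_cases hA : A ≤ 0
      · have h1 : A * y * d.Ψ (Real.log y) ^ θ ≤ 0 := by
          have := mul_nonneg (mul_nonneg (neg_nonneg.mpr hA) hy0) hΨyθ
          nlinarith
        have h2 : (A * y * d.Ψ (Real.log y) ^ θ + B) * f x ≤ M * f x :=
          mul_le_mul_of_nonneg_right (by linarith [le_abs_self B]) hfx.le
        linarith
      · push_neg at hA
        by_cases hxx : x ≤ x₀
        · have hyCK : y ≤ CK := hCK x ⟨⟨hx0.le, hxx⟩, hx⟩
          have hyC₂ : y ≤ C₂ := hyCK.trans (le_max_left _ _)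
          have hlogC₂ : Real.log y ≤ Real.log C₂ := Real.log_le_log hypos hyC₂
          have hΨmono : d.Ψ (Real.log y) ≤ d.Ψ (Real.log C₂) :=
            hΨ_mono _ _ hlogy.le hlogC₂
          have hpow : d.Ψ (Real.log y) ^ θ ≤ d.Ψ (Real.log C₂) ^ θ :=
            Real.rpow_le_rpow hΨy0 hΨmono hθ0
          have h1 : A * y * d.Ψ (Real.log y) ^ θ ≤ A * C₂ * d.Ψ (Real.log C₂) ^ θ := by
            have hAy : A * y ≤ A * C₂ := mul_le_mul_of_nonneg_left hyC₂ hA.le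
            have hAC₂ : 0 ≤ A * C₂ := mul_nonneg hA.le hC₂pos.le
            have hAy0 : 0 ≤ A * y := mul_nonneg hA.le hy0
            exact mul_le_mul hAy hpow hΨyθ hAC₂
          have h2 : A * C₂ * d.Ψ (Real.log C₂) ^ θ + |B| ≤ M := by
            rw [hM]
            have := le_abs_self (A * C₂ * d.Ψ (Real.log C₂) ^ θ)
            have := abs_nonneg (d.ybar * Real.log d.ybar)
            linarith
          have h3 : (A * y * d.Ψ (Real.log y) ^ θ + B) * f x ≤ M * f x :=
            mul_le_mul_of_nonneg_right (by linarith [le_abs_self B]) hfx.le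
          linarith
        · push_neg at hxx
          have hx₁x : x₁ ≤ x := le_of_lt (lt_of_le_of_lt (le_max_left x₁ 1) hxx)
          obtain ⟨hg1x, hΨφ, hφx⟩ := hx₁ x hx₁x
          have hΨφx : d.Ψ (φ x) ≤ C * x := by
            have h1 := (div_le_iff₀ hx0).mp hΨφ
            have h2 : C₀ * x ≤ C * x := mul_le_mul_of_nonneg_right (le_max_left _ _) hx0.le
            linarith
          have hlogyφ : Real.log y ≤ φ x := by
            have hy_le : y ≤ Real.exp (φ x) := by
              rw [hy, hf x hx, div_le_iff₀ (Real.exp_pos _), ← Real.exp_add]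
              simpa using hg1x
            have := Real.log_le_log hypos hy_le
            rwa [Real.log_exp] at this
          have hΨ2 : d.Ψ (Real.log y) ≤ C * x :=
            (hΨ_mono _ _ hlogy.le hlogyφ).trans hΨφx
          have hpow : d.Ψ (Real.log y) ^ θ ≤ C ^ θ * x ^ θ := by
            calc d.Ψ (Real.log y) ^ θ ≤ (C * x) ^ θ := Real.rpow_le_rpow hΨy0 hΨ2 hθ0
              _ = C ^ θ * x ^ θ := Real.mul_rpow hC_pos.le hx0.le
          have hyf : y * f x = g x := div_mul_cancel₀ _ hfx.ne'
          have expand : (A * y * d.Ψ (Real.log y) ^ θ + B) * f x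
              = A * d.Ψ (Real.log y) ^ θ * (y * f x) + B * f x := by ring
          rw [expand, hyf, hK]
          have h1 : A * d.Ψ (Real.log y) ^ θ * g x ≤ A * (C ^ θ * x ^ θ) * g x :=
            mul_le_mul_of_nonneg_right (mul_le_mul_of_nonneg_left hpow hA.le) hgx
          have h2 : A * (C ^ θ * x ^ θ) * g x = |A| * C ^ θ * (x ^ θ * g x) := by
            rw [abs_of_pos hA]; ring
          have h3 : B * f x ≤ M * f x :=
            mul_le_mul_of_nonneg_right (le_trans (le_abs_self B) hBM) hfx.le
          linarith
  have hfInt : IntegrableOn f (Set.Ioi 0) := integrable_of_integral_eq_one hfint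
  have hHInt : IntegrableOn (fun x => M * f x + K * (x ^ θ * g x)) (Set.Ioi 0) :=
    (hfInt.const_mul M).add (hmom.const_mul K)
  rw [Ddiv]
  calc ∫⁻ x in Set.Ioi (0:ℝ), ENNReal.ofReal (d.FPhi θ (g x / f x) * f x)
      ≤ ∫⁻ x in Set.Ioi (0:ℝ), ENNReal.ofReal (M * f x + K * (x ^ θ * g x)) := by
        refine lintegral_mono_ae ?_
        rw [ae_restrict_iff' measurableSet_Ioi]
        exact Eventually.of_forall fun x hx => ENNReal.ofReal_le_ofReal (key x hx)
    _ ≤ ∫⁻ x in Set.Ioi (0:ℝ), ‖M * f x + K * (x ^ θ * g x)‖ₑ :=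
        lintegral_ofReal_le_lintegral_enorm _
    _ < ⊤ := hHInt.2
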